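/- Fix σ ∈ (0,1), ε ∈ (0,1) and reals 0 < L < U. Let K ≥ 1 and let L = c_1 < c_2 < ... < c_{K+1} = U satisfy Φ^g(c_k, c_{k+1}) = ε for every k ∈ {1,...,K−1} and Φ^g(c_K, c_{K+1}) ≤ ε. Suppose t^g > 1 is a real satisfying ((t^g)^σ + 1)/((t^g) + 1)^σ = 2^(1−σ)·(1−ε). Then ln(U/L)/ln(t^g) ≤ K ≤ −σ·ln(U/L)/ln(1−ε) + 1. -/

import Mathlib

/-- f(t) = t^(σ-1) (real power). -/
noncomputable def fCNL (σ t : ℝ) : ℝ := t ^ (σ - 1)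

/-- g(t) = t^σ (real power). -/
noncomputable def gCNL (σ t : ℝ) : ℝ := t ^ σ

/-- Chord (linear interpolation) approximation of f on [c,u], evaluated at t. -/
noncomputable def fhat (σ c u t : ℝ) : ℝ :=
  fCNL σ c + ((fCNL σ u - fCNL σ c) / (u - c)) * (t - c)

/-- Chord (linear interpolation) approximation of g on [c,u], evaluated at t. -/
noncomputable def ghat (σ c u t : ℝ) : ℝ :=
  gCNL σ c + ((gCNL σ u - gCNL σ c) / (u - c)) * (t - c)

/-- Pointwise relative error of the chord approximation of f. -/
noncomputable def phiF (σ c u t : ℝ) : ℝ := (fhat σ c u t - fCNL σ t) / fCNL σ t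

/-- Pointwise relative error of the chord approximation of g. -/
noncomputable def phiG (σ c u t : ℝ) : ℝ := (gCNL σ t - ghat σ c u t) / gCNL σ t

/-- Maximum relative error of the chord approximation of f on [c,u]. -/
noncomputable def PhiF (σ c u : ℝ) : ℝ := sSup (phiF σ c u '' Set.Icc c u)

/-- Maximum relative error of the chord approximation of g on [c,u]. -/
noncomputable def PhiG (σ c u : ℝ) : ℝ := sSup (phiG σ c u '' Set.Icc c u)

open Real in
noncomputable def hfun (σ : ℝ) : ℝ → ℝ := fun x => (1 + x ^ σ) / (1 + x) ^ σ

lemma hfun_anti {σ : ℝ} (hσ0 : 0 < σ) (hσ1 : σ < 1) :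
    StrictAntiOn (hfun σ) (Set.Ici 1) := by
  have hcont : ContinuousOn (hfun σ) (Set.Ici 1) := by
    apply ContinuousOn.div
    · exact continuousOn_const.add (fun x hx =>
        ((Real.continuousAt_rpow_const x σ (Or.inl (by simp at hx; positivity))).continuousWithinAt))
    · exact fun x hx =>
        ((Real.continuousAt_rpow_const (1+x) σ (Or.inl (by simp at hx; positivity))).comp
          (continuous_const.add continuous_id).continuousAt).continuousWithinAt
    · intro x hx
      simp only [Set.mem_Ici] at hx
      positivity
  apply strictAntiOn_of_deriv_neg (convex_Ici 1) hcont
  intro x hx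
  rw [interior_Ici] at hx
  have hx1 : (1:ℝ) < x := hx
  have hx0 : (0:ℝ) < x := by linarith
  have h1x : (0:ℝ) < 1 + x := by linarith
  have hd1 : HasDerivAt (fun y : ℝ => 1 + y ^ σ) (σ * x ^ (σ - 1)) x := by
    simpa using (Real.hasDerivAt_rpow_const (x := x) (p := σ) (Or.inl hx0.ne')).const_add 1
  have hd2i : HasDerivAt (fun y : ℝ => 1 + y) 1 x := by
    simpa using (hasDerivAt_id x).const_add 1
  have hd2 : HasDerivAt (fun y : ℝ => (1 + y) ^ σ) (σ * (1 + x) ^ (σ - 1) * 1) x :=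
    (Real.hasDerivAt_rpow_const (x := 1 + x) (p := σ) (Or.inl h1x.ne')).comp x hd2i
  have hden : (1 + x) ^ σ ≠ 0 := by positivity
  have hd : HasDerivAt (hfun σ)
      ((σ * x ^ (σ - 1) * (1 + x) ^ σ - (1 + x ^ σ) * (σ * (1 + x) ^ (σ - 1) * 1)) /
        ((1 + x) ^ σ) ^ 2) x := hd1.div hd2 hden
  rw [hd.deriv]
  apply div_neg_of_neg_of_pos
  · have hA : (1 + x) ^ σ = (1 + x) ^ (σ - 1) * (1 + x) := by
      rw [← Real.rpow_add_one h1x.ne']; ring_nf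
    have hB : x ^ σ = x ^ (σ - 1) * x := by
      rw [← Real.rpow_add_one hx0.ne']; ring_nf
    have hnum : σ * x ^ (σ - 1) * (1 + x) ^ σ - (1 + x ^ σ) * (σ * (1 + x) ^ (σ - 1) * 1)
        = σ * (1 + x) ^ (σ - 1) * (x ^ (σ - 1) - 1) := by
      rw [hA, hB]; ring
    rw [hnum]
    have hlt : x ^ (σ - 1) < 1 :=
      Real.rpow_lt_one_of_one_lt_of_neg hx1 (by linarith)
    have hp : (0:ℝ) < (1 + x) ^ (σ - 1) := by positivity
    exact mul_neg_of_pos_of_neg (by positivity) (by linarith)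
  · positivity


open Real

lemma phiG_le_bound {σ c u : ℝ} (hσ0 : 0 < σ) (hc : 0 < c) (hcu : c < u) {t : ℝ}
    (ht : t ∈ Set.Icc c u) : phiG σ c u t ≤ 1 - (c / u) ^ σ := by
  obtain ⟨htc, htu⟩ := ht
  have ht0 : 0 < t := lt_of_lt_of_le hc htc
  have hu0 : 0 < u := hc.trans hcu
  have hts : 0 < t ^ σ := rpow_pos_of_pos ht0 σ
  have hcs : 0 < c ^ σ := rpow_pos_of_pos hc σ
  have hus : 0 < u ^ σ := rpow_pos_of_pos hu0 σ
  have hcu' : c ^ σ ≤ u ^ σ := Real.rpow_le_rpow hc.le hcu.le hσ0.le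
  have htu' : t ^ σ ≤ u ^ σ := Real.rpow_le_rpow ht0.le htu hσ0.le
  have hgh : c ^ σ ≤ ghat σ c u t := by
    unfold ghat gCNL
    have h1 : 0 ≤ (u ^ σ - c ^ σ) / (u - c) := by
      apply div_nonneg <;> linarith
    nlinarith [mul_nonneg h1 (by linarith : (0:ℝ) ≤ t - c)]
  have hdiv : (c / u) ^ σ = c ^ σ / u ^ σ := Real.div_rpow hc.le hu0.le σ
  unfold phiG gCNL
  rw [div_le_iff₀ hts, hdiv]
  have key : c ^ σ / u ^ σ * t ^ σ ≤ c ^ σ := by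
    rw [div_mul_eq_mul_div, div_le_iff₀ hus]
    nlinarith
  nlinarith

lemma PhiG_le_bound {σ c u : ℝ} (hσ0 : 0 < σ) (hc : 0 < c) (hcu : c < u) :
    PhiG σ c u ≤ 1 - (c / u) ^ σ := by
  apply csSup_le
  · exact (Set.nonempty_Icc.2 hcu.le).image _
  · rintro y ⟨t, ht, rfl⟩
    exact phiG_le_bound hσ0 hc hcu ht

lemma PhiG_ge_mid {σ c u : ℝ} (hσ0 : 0 < σ) (hc : 0 < c) (hcu : c < u) :
    phiG σ c u ((c + u) / 2) ≤ PhiG σ c u := by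
  apply le_csSup
  · exact ⟨1 - (c / u) ^ σ, by rintro y ⟨t, ht, rfl⟩; exact phiG_le_bound hσ0 hc hcu ht⟩
  · exact Set.mem_image_of_mem _ ⟨by linarith, by linarith⟩

lemma phiG_mid {σ c u : ℝ} (hc : 0 < c) (hcu : c < u) :
    phiG σ c u ((c + u) / 2) = 1 - (c ^ σ + u ^ σ) / (2 * ((c + u) / 2) ^ σ) := by
  have hm : (0:ℝ) < (c + u) / 2 := by linarith
  have hms : (0:ℝ) < ((c + u) / 2) ^ σ := rpow_pos_of_pos hm σ
  unfold phiG ghat gCNL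
  have huc : u - c ≠ 0 := by linarith
  field_simp
  ring


-- lower ratio: ε ≤ PhiG → c ≤ (1-ε)^(1/σ) * u
lemma ratio_lower {σ ε c u : ℝ} (hσ0 : 0 < σ) (hε1 : ε < 1) (hc : 0 < c) (hcu : c < u)
    (h : ε ≤ PhiG σ c u) : c ≤ (1 - ε) ^ (1/σ) * u := by
  have hu0 : 0 < u := hc.trans hcu
  have h1 : (c / u) ^ σ ≤ 1 - ε := by
    have := h.trans (PhiG_le_bound hσ0 hc hcu); linarith
  have h2 : ((c / u) ^ σ) ^ (1/σ) ≤ (1 - ε) ^ (1/σ) :=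
    Real.rpow_le_rpow (by positivity) h1 (by positivity)
  have h3 : ((c / u) ^ σ) ^ (1/σ) = c / u := by
    rw [← Real.rpow_mul (by positivity : (0:ℝ) ≤ c / u)]
    rw [mul_one_div_cancel hσ0.ne', Real.rpow_one]
  rw [h3] at h2
  calc c = c / u * u := by field_simp
  _ ≤ (1 - ε) ^ (1/σ) * u := by nlinarith

-- upper ratio: PhiG ≤ ε → u ≤ tg * c
lemma ratio_upper {σ ε c u tg : ℝ} (hσ0 : 0 < σ) (hσ1 : σ < 1) (hε0 : 0 < ε) (hε1 : ε < 1)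
    (hc : 0 < c) (hcu : c < u) (htg : 1 < tg)
    (htgeq : (tg ^ σ + 1) / (tg + 1) ^ σ = (2 : ℝ) ^ (1 - σ) * (1 - ε))
    (h : PhiG σ c u ≤ ε) : u ≤ tg * c := by
  have hu0 : 0 < u := hc.trans hcu
  have hm : (0:ℝ) < (c + u) / 2 := by linarith
  have hms : (0:ℝ) < ((c + u) / 2) ^ σ := rpow_pos_of_pos hm σ
  have hmid : 1 - (c ^ σ + u ^ σ) / (2 * ((c + u) / 2) ^ σ) ≤ ε := by
    rw [← phiG_mid hc hcu]; exact (PhiG_ge_mid hσ0 hc hcu).trans h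
  have key : (1 - ε) * (2 * ((c + u) / 2) ^ σ) ≤ c ^ σ + u ^ σ := by
    have h1 : 1 - ε ≤ (c ^ σ + u ^ σ) / (2 * ((c + u) / 2) ^ σ) := by linarith
    rw [le_div_iff₀ (by positivity)] at h1
    linarith
  -- translate to hfun
  set r := u / c with hr
  have hr1 : 1 < r := (one_lt_div hc).2 hcu
  have hu : u = c * r := by rw [hr]; field_simp
  have hus : u ^ σ = c ^ σ * r ^ σ := by
    rw [hu, Real.mul_rpow hc.le (by positivity)]
  have hmval : ((c + u) / 2) ^ σ = c ^ σ * ((1 + r) ^ σ / 2 ^ σ) := by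
    have : (c + u) / 2 = c * ((1 + r) / 2) := by rw [hu]; ring
    rw [this, Real.mul_rpow hc.le (by positivity),
      Real.div_rpow (by positivity) (by norm_num) σ]
  have h2s : (2:ℝ) ^ (1 - σ) = 2 / 2 ^ σ := by
    rw [Real.rpow_sub (by norm_num), Real.rpow_one]
  have hcs : (0:ℝ) < c ^ σ := rpow_pos_of_pos hc σ
  have h2sp : (0:ℝ) < (2:ℝ) ^ σ := by positivity
  have hrp : (0:ℝ) < (1 + r) ^ σ := by positivity
  have hhr : hfun σ tg ≤ hfun σ r := by
    unfold hfun
    have htgp : (0:ℝ) < (1 + tg) ^ σ := by positivity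
    have heq1 : (1 + tg ^ σ) / (1 + tg) ^ σ = 2 ^ (1 - σ) * (1 - ε) := by
      rw [← htgeq]; ring_nf
    rw [heq1, h2s]
    rw [hus, hmval] at key
    rw [le_div_iff₀ hrp]
    have key2 : (1 - ε) * (2 * ((1 + r) ^ σ / 2 ^ σ)) ≤ 1 + r ^ σ := by
      have := key
      nlinarith
    calc 2 / 2 ^ σ * (1 - ε) * (1 + r) ^ σ
        = (1 - ε) * (2 * ((1 + r) ^ σ / 2 ^ σ)) := by field_simp
      _ ≤ 1 + r ^ σ := key2
  by_contra hcon
  push_neg at hcon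
  have hrtg : tg < r := by
    rw [hr, lt_div_iff₀ hc]; nlinarith
  have := hfun_anti hσ0 hσ1 (Set.mem_Ici.2 htg.le) (Set.mem_Ici.2 (htg.le.trans hrtg.le)) hrtg
  linarith
  -- conclude r ≤ tg hence u ≤ tg * c


/-- Lemma 5 (part for g): bounds on the number of sub-intervals needed to
approximate g to relative error ε. -/
theorem stmt_10 (σ ε L U : ℝ) (hσ0 : 0 < σ) (hσ1 : σ < 1) (hε0 : 0 < ε) (hε1 : ε < 1)
    (hL : 0 < L) (hLU : L < U)
    (K : ℕ) (hK : 1 ≤ K) (c : ℕ → ℝ)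
    (hc1 : c 1 = L) (hcK : c (K + 1) = U)
    (hmono : ∀ k, 1 ≤ k → k ≤ K → c k < c (k + 1))
    (heq : ∀ k, 1 ≤ k → k ≤ K - 1 → PhiG σ (c k) (c (k + 1)) = ε)
    (hlast : PhiG σ (c K) (c (K + 1)) ≤ ε)
    (tg : ℝ) (htg : 1 < tg)
    (htgeq : (tg ^ σ + 1) / (tg + 1) ^ σ = (2 : ℝ) ^ (1 - σ) * (1 - ε)) :
    Real.log (U / L) / Real.log tg ≤ (K : ℝ) ∧
    (K : ℝ) ≤ -σ * Real.log (U / L) / Real.log (1 - ε) + 1 := by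
  -- positivity of c k on [1, K+1]
  have hpos : ∀ k, 1 ≤ k → k ≤ K + 1 → 0 < c k := by
    intro k hk1 hk2
    induction k with
    | zero => omega
    | succ n ih =>
      rcases Nat.eq_or_lt_of_le hk1 with h | h
      · rw [← h, hc1]; exact hL  -- n+1 = 1? careful: h : 1 = n+1
      · have hn1 : 1 ≤ n := by omega
        have := hmono n hn1 (by omega)
        have := ih hn1 (by omega)
        linarith
  -- PhiG ≤ ε on all intervals
  have hPhile : ∀ k, 1 ≤ k → k ≤ K → PhiG σ (c k) (c (k + 1)) ≤ ε := by
    intro k hk1 hk2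
    rcases Nat.eq_or_lt_of_le hk2 with h | h
    · rw [h]; exact hlast
    · exact (heq k hk1 (by omega)).le
  -- upper chain : c (j+1) ≤ tg ^ j * L
  have chain1 : ∀ j, j ≤ K → c (j + 1) ≤ tg ^ j * L := by
    intro j hj
    induction j with
    | zero => simp [hc1]
    | succ n ih =>
      have h1 : c (n + 1 + 1) ≤ tg * c (n + 1) :=
        ratio_upper hσ0 hσ1 hε0 hε1 (hpos (n+1) (by omega) (by omega))
          (hmono (n+1) (by omega) (by omega)) htg htgeq (hPhile (n+1) (by omega) (by omega))
      have h2 := ih (by omega)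
      have htg0 : (0:ℝ) < tg := by linarith
      calc c (n + 1 + 1) ≤ tg * c (n + 1) := h1
        _ ≤ tg * (tg ^ n * L) := by nlinarith
        _ = tg ^ (n + 1) * L := by ring
  -- lower chain : L ≤ q ^ j * c (j+1) for j ≤ K - 1, where q = (1-ε)^(1/σ)
  set q : ℝ := (1 - ε) ^ (1/σ) with hq
  have hq0 : 0 < q := rpow_pos_of_pos (by linarith) _
  have chain2 : ∀ j, j ≤ K - 1 → L ≤ q ^ j * c (j + 1) := by
    intro j hj
    induction j with
    | zero => simp [hc1]
    | succ n ih =>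
      have h1 : c (n + 1) ≤ q * c (n + 1 + 1) :=
        ratio_lower hσ0 hε1 (hpos (n+1) (by omega) (by omega))
          (hmono (n+1) (by omega) (by omega)) (heq (n+1) (by omega) (by omega)).ge
      have h2 := ih (by omega)
      have hqn : (0:ℝ) < q ^ n := by positivity
      calc L ≤ q ^ n * c (n + 1) := h2
        _ ≤ q ^ n * (q * c (n + 1 + 1)) := by nlinarith
        _ = q ^ (n + 1) * c (n + 1 + 1) := by ring
  have hU0 : 0 < U := hL.trans hLU
  have hUL1 : 0 < U / L := by positivity
  have hltg : 0 < Real.log tg := Real.log_pos htg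
  have hlε : Real.log (1 - ε) < 0 := Real.log_neg (by linarith) (by linarith)
  constructor
  · -- lower bound on K
    have h1 : U ≤ tg ^ K * L := by rw [← hcK]; exact chain1 K le_rfl
    have h2 : U / L ≤ tg ^ K := by rw [div_le_iff₀ hL]; linarith
    have h3 : Real.log (U / L) ≤ (K : ℝ) * Real.log tg := by
      calc Real.log (U / L) ≤ Real.log (tg ^ K) := Real.log_le_log hUL1 h2
        _ = (K : ℝ) * Real.log tg := by rw [Real.log_pow]
    rw [div_le_iff₀ hltg]; linarith
  · -- upper bound on K
    have hcKlt : c K < U := by rw [← hcK]; exact hmono K hK le_rfl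
    have h1 : L ≤ q ^ (K - 1) * c K := by
      have := chain2 (K - 1) le_rfl
      rwa [Nat.sub_add_cancel hK] at this
    have h2 : L ≤ q ^ (K - 1) * U := by nlinarith [pow_pos hq0 (K-1)]
    have h3 : Real.log L ≤ (↑(K - 1) : ℝ) * Real.log q + Real.log U := by
      calc Real.log L ≤ Real.log (q ^ (K - 1) * U) := Real.log_le_log hL h2
        _ = (↑(K - 1) : ℝ) * Real.log q + Real.log U := by
            rw [Real.log_mul (by positivity) hU0.ne', Real.log_pow]
    have hlq : Real.log q = (1/σ) * Real.log (1 - ε) := Real.log_rpow (by linarith) _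
    have hlogdiv : Real.log (U / L) = Real.log U - Real.log L := Real.log_div hU0.ne' hL.ne'
    have hKc : (↑(K - 1) : ℝ) = (K : ℝ) - 1 := by
      have : (1:ℕ) ≤ K := hK
      push_cast [Nat.cast_sub this]
      ring
    rw [hKc, hlq] at h3
    -- ((K:ℝ) - 1) * ((1/σ) * log(1-ε)) + log U ≥ log L
    -- goal : K ≤ -σ * log(U/L) / log(1-ε) + 1
    have h4 : σ * Real.log L ≤ ((K:ℝ) - 1) * Real.log (1 - ε) + σ * Real.log U := by
      calc σ * Real.log L ≤ σ * (((K:ℝ) - 1) * (1 / σ * Real.log (1 - ε)) + Real.log U) :=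
            mul_le_mul_of_nonneg_left h3 hσ0.le
        _ = ((K:ℝ) - 1) * Real.log (1 - ε) + σ * Real.log U := by
            field_simp
    have hX : ((K:ℝ) - 1) * Real.log (1 - ε) ≥ -σ * Real.log (U / L) := by
      rw [hlogdiv]; linarith
    set a := Real.log (1 - ε)
    set D := -σ * Real.log (U / L) / a with hD
    have hDa : D * a = -σ * Real.log (U / L) := div_mul_cancel₀ _ hlε.ne
    nlinarith [hX, hlε, hDa]
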